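/- (Projection lower bound (eb.3)) Let H be a complex Hilbert space and let P : H → H be a continuous linear map with P ∘ P = P. Then for every ψ ∈ H: ( 1 − ‖ P* ∘ (1 − P) ‖² ) · ‖Pψ‖² ≤ ‖ψ‖², where P* is the Hilbert-space adjoint of P, 1 is the identity of H, and ‖·‖ denotes the Hilbert norm (operator norm for maps). -/

import Mathlib

noncomputable section

/-- Projection lower bound (eb.3). -/
theorem projection_lower_bound
    {H : Type*} [NormedAddCommGroup H] [InnerProductSpace ℂ H] [CompleteSpace H]
    (P : H →L[ℂ] H) (hP : P.comp P = P) (ψ : H) :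
    (1 - ‖(ContinuousLinearMap.adjoint P).comp
        (ContinuousLinearMap.id ℂ H - P)‖ ^ 2) * ‖P ψ‖ ^ 2
      ≤ ‖ψ‖ ^ 2 := by
  set Q : H →L[ℂ] H := ContinuousLinearMap.id ℂ H - P with hQdef
  set T : H →L[ℂ] H := (ContinuousLinearMap.adjoint P).comp Q with hT
  set c : ℝ := ‖T‖ with hc
  set a : ℝ := ‖P ψ‖ with ha
  set y : H := ψ - P ψ with hy
  set b : ℝ := ‖y‖ with hb
  have hidem : ∀ x : H, P (P x) = P x := fun x => by
    have := congrArg (fun T : H →L[ℂ] H => T x) hP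
    simpa using this
  have hPy : P y = 0 := by simp [hy, map_sub, hidem ψ]
  have hQy : Q y = y := by simp [hQdef, ContinuousLinearMap.sub_apply, hPy]
  -- adjoint T = (adjoint Q) ∘ P
  have hadjT : ContinuousLinearMap.adjoint T
      = (ContinuousLinearMap.adjoint Q).comp P := by
    rw [hT, ContinuousLinearMap.adjoint_comp, ContinuousLinearMap.adjoint_adjoint]
  -- key inner product identity
  have hkey : (inner ℂ (P ψ) y : ℂ)
      = inner ℂ ((ContinuousLinearMap.adjoint T) (P ψ)) y := by
    rw [hadjT, ContinuousLinearMap.comp_apply, ContinuousLinearMap.adjoint_inner_left,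
      hidem, hQy]
  -- bound on the cross term
  have hnormadjT : ‖ContinuousLinearMap.adjoint T‖ = c := by
    rw [hc]; exact ContinuousLinearMap.adjoint.norm_map T
  have hbound : ‖(inner ℂ (P ψ) y : ℂ)‖ ≤ c * a * b := by
    rw [hkey]
    calc ‖(inner ℂ ((ContinuousLinearMap.adjoint T) (P ψ)) y : ℂ)‖
        ≤ ‖(ContinuousLinearMap.adjoint T) (P ψ)‖ * ‖y‖ := norm_inner_le_norm _ _
      _ ≤ (c * a) * b := by
          apply mul_le_mul_of_nonneg_right _ (norm_nonneg _)
          calc ‖(ContinuousLinearMap.adjoint T) (P ψ)‖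
              ≤ ‖ContinuousLinearMap.adjoint T‖ * ‖P ψ‖ :=
                (ContinuousLinearMap.adjoint T).le_opNorm _
            _ = c * a := by rw [hnormadjT, ha]
      _ = c * a * b := by ring
  have hre : |RCLike.re (inner ℂ (P ψ) y : ℂ)| ≤ c * a * b :=
    le_trans (RCLike.abs_re_le_norm _) hbound
  -- norm expansion
  have hψ : P ψ + y = ψ := by rw [hy]; abel
  have hexp : ‖ψ‖ ^ 2 = a ^ 2 + 2 * RCLike.re (inner ℂ (P ψ) y : ℂ) + b ^ 2 := by
    conv_lhs => rw [← hψ]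
    exact norm_add_sq (𝕜 := ℂ) (P ψ) y
  have habs := abs_le.mp hre
  nlinarith [sq_nonneg (c * a - b), habs.1, habs.2]

end
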